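/- arXiv:1705.08678 — 3 statements merged into one kernel-verified Lean document; each statement's English description precedes it below -/
import Mathlib

section
/- Let H be a symmetric positive definite block matrix with blocks A = ∇²_{aa}f, B = ∇²_{au}f, D = ∇²_{uu}f, and let S = A − B D^{-1} Bᵀ be the Schur complement of D. Then the condition number of S is at most the condition number of H: κ(S) ≤ κ(H). -/
open Matrix

private lemma quad_eq'' {m : Type*} [Fintype m] [DecidableEq m]
    {M : Matrix m m ℝ} (hM : M.IsHermitian) (x : m → ℝ) :
    x ⬝ᵥ (M *ᵥ x) = ∑ i, hM.eigenvalues i *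
      ((star (hM.eigenvectorUnitary : Matrix m m ℝ) *ᵥ x) i)^2 := by
  conv_lhs => rw [hM.spectral_theorem, Unitary.conjStarAlgAut_apply]
  set U : Matrix m m ℝ := (hM.eigenvectorUnitary : Matrix m m ℝ) with hU
  have hsU : star U = Uᵀ := by
    rw [star_eq_conjTranspose, conjTranspose_eq_transpose_of_trivial]
  rw [← mulVec_mulVec, ← mulVec_mulVec, dotProduct_mulVec x U]
  rw [show x ᵥ* U = star U *ᵥ x by rw [hsU, mulVec_transpose]]
  simp only [dotProduct, mulVec_diagonal, pow_two, Function.comp, RCLike.ofReal_real_eq_id, id_eq]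
  apply Finset.sum_congr rfl
  intros; ring

private lemma norm_eq'' {m : Type*} [Fintype m] [DecidableEq m]
    {M : Matrix m m ℝ} (hM : M.IsHermitian) (x : m → ℝ) :
    x ⬝ᵥ x = ∑ i, ((star (hM.eigenvectorUnitary : Matrix m m ℝ) *ᵥ x) i)^2 := by
  set U : Matrix m m ℝ := (hM.eigenvectorUnitary : Matrix m m ℝ) with hU
  have hsU : star U = Uᵀ := by
    rw [star_eq_conjTranspose, conjTranspose_eq_transpose_of_trivial]
  have h1 : U * star U = 1 := (Unitary.mem_iff.mp hM.eigenvectorUnitary.2).2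
  have h2 : ∑ i, ((star U *ᵥ x) i)^2 = (star U *ᵥ x) ⬝ᵥ (star U *ᵥ x) := by
    simp [dotProduct, pow_two]
  rw [h2, dotProduct_mulVec, hsU, ← mulVec_transpose, transpose_transpose,
    mulVec_mulVec, ← hsU, h1, one_mulVec]

private lemma dot_le_iSup' {m : Type*} [Fintype m] [DecidableEq m] [Nonempty m]
    {M : Matrix m m ℝ} (hM : M.IsHermitian) (x : m → ℝ) :
    x ⬝ᵥ (M *ᵥ x) ≤ (⨆ i, hM.eigenvalues i) * (x ⬝ᵥ x) := by
  rw [quad_eq'' hM x, norm_eq'' hM x, Finset.mul_sum]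
  refine Finset.sum_le_sum fun i _ => ?_
  exact mul_le_mul_of_nonneg_right (le_ciSup (Set.Finite.bddAbove (Set.finite_range _)) i)
    (sq_nonneg _)

private lemma iInf_le_dot' {m : Type*} [Fintype m] [DecidableEq m] [Nonempty m]
    {M : Matrix m m ℝ} (hM : M.IsHermitian) (x : m → ℝ) :
    (⨅ i, hM.eigenvalues i) * (x ⬝ᵥ x) ≤ x ⬝ᵥ (M *ᵥ x) := by
  rw [quad_eq'' hM x, norm_eq'' hM x, Finset.mul_sum]
  refine Finset.sum_le_sum fun i _ => ?_
  exact mul_le_mul_of_nonneg_right (ciInf_le (Set.Finite.bddBelow (Set.finite_range _)) i)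
    (sq_nonneg _)

private lemma dot_self_pos' {m : Type*} [Fintype m] {v : m → ℝ} (hv : v ≠ 0) : 0 < v ⬝ᵥ v := by
  obtain ⟨i, hi⟩ := Function.ne_iff.mp hv
  exact Finset.sum_pos' (fun j _ => mul_self_nonneg _)
    ⟨i, Finset.mem_univ i, mul_self_pos.mpr hi⟩

private lemma dot_self_nonneg' {m : Type*} [Fintype m] (v : m → ℝ) : 0 ≤ v ⬝ᵥ v :=
  Finset.sum_nonneg fun j _ => mul_self_nonneg _

/-- for a symmetric positive definite block matrix
H = [[A,B],[Bᵀ,D]], the condition number of the Schur complement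
S = A − B D⁻¹ Bᵀ is at most that of H: κ(S) ≤ κ(H), where
κ(M) = λ_max(M)/λ_min(M). -/
theorem stmt3 {l n : ℕ} (hl : 0 < l) (hn : 0 < n)
    (A : Matrix (Fin l) (Fin l) ℝ) (B : Matrix (Fin l) (Fin n) ℝ)
    (D : Matrix (Fin n) (Fin n) ℝ)
    (hH : (Matrix.fromBlocks A B Bᵀ D).PosDef)
    (hS : (A - B * D⁻¹ * Bᵀ).IsHermitian) :
    (⨆ i, hS.eigenvalues i) / (⨅ i, hS.eigenvalues i)
      ≤ (⨆ i, hH.1.eigenvalues i) / (⨅ i, hH.1.eigenvalues i) := by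
  haveI : Nonempty (Fin l) := Fin.pos_iff_nonempty.mp hl
  haveI : Nonempty (Fin n) := Fin.pos_iff_nonempty.mp hn
  have hD : D.PosDef := by
    refine PosDef.of_dotProduct_mulVec_pos ?_ ?_
    · have h := hH.1
      rw [IsHermitian, fromBlocks_conjTranspose] at h
      exact (fromBlocks_inj.mp h).2.2.2
    · intro x hx
      have h := hH.dotProduct_mulVec_pos (x := Sum.elim 0 x) (by
        intro h
        exact hx (funext fun i => congrFun h (Sum.inr i)))
      simpa [fromBlocks_mulVec, Function.star_sumElim, sumElim_dotProduct_sumElim] using h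
  haveI : Invertible D := hD.isUnit.invertible
  -- Schur complement quadratic form identity
  have key : ∀ v : Fin l → ℝ,
      (Sum.elim v (-((D⁻¹ * Bᵀ) *ᵥ v))) ⬝ᵥ
        ((fromBlocks A B Bᵀ D) *ᵥ (Sum.elim v (-((D⁻¹ * Bᵀ) *ᵥ v))))
        = v ⬝ᵥ ((A - B * D⁻¹ * Bᵀ) *ᵥ v) := by
    intro v
    have h := schur_complement_eq₂₂ A B v (-((D⁻¹ * Bᴴ) *ᵥ v)) hD.isHermitian
    simp only [star_trivial, add_neg_cancel] at h
    rw [dotProduct_mulVec]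
    simpa [conjTranspose_eq_transpose_of_trivial, dotProduct_mulVec] using h
  -- positivity of the smallest eigenvalue of H
  have hinfH : 0 < ⨅ i, hH.1.eigenvalues i := by
    obtain ⟨i0, hi0⟩ := exists_eq_ciInf_of_finite (f := hH.1.eigenvalues)
    rw [← hi0]
    exact hH.eigenvalues_pos i0
  -- B * D⁻¹ * Bᵀ is positive semidefinite
  have hps : (B * D⁻¹ * Bᵀ).PosSemidef := by
    have h := hD.inv.posSemidef.mul_mul_conjTranspose_same B
    simpa [conjTranspose_eq_transpose_of_trivial] using h
  -- each eigenvalue of S is at most sup of eigenvalues of H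
  have hsup : ∀ i, hS.eigenvalues i ≤ ⨆ j, hH.1.eigenvalues j := by
    intro i
    set v : Fin l → ℝ := ⇑(hS.eigenvectorBasis i) with hv
    have hv0 : v ≠ 0 := fun h =>
      (hS.eigenvectorBasis.orthonormal.ne_zero i) (by ext j; exact congrFun h j)
    have hvp : 0 < v ⬝ᵥ v := dot_self_pos' hv0
    have e1 : v ⬝ᵥ ((A - B * D⁻¹ * Bᵀ) *ᵥ v) = hS.eigenvalues i * (v ⬝ᵥ v) := by
      rw [hS.mulVec_eigenvectorBasis i]
      simp [dotProduct_smul, smul_eq_mul]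
      exact Or.inl rfl
    have e2 : v ⬝ᵥ ((A - B * D⁻¹ * Bᵀ) *ᵥ v) ≤ v ⬝ᵥ (A *ᵥ v) := by
      have h := hps.dotProduct_mulVec_nonneg v
      rw [star_trivial] at h
      rw [sub_mulVec, dotProduct_sub]
      linarith
    have e3 : v ⬝ᵥ (A *ᵥ v) =
        (Sum.elim v (0 : Fin n → ℝ)) ⬝ᵥ ((fromBlocks A B Bᵀ D) *ᵥ Sum.elim v 0) := by
      simp [fromBlocks_mulVec, sumElim_dotProduct_sumElim]
    have e4 := dot_le_iSup' hH.1 (Sum.elim v (0 : Fin n → ℝ))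
    have e5 : (Sum.elim v (0 : Fin n → ℝ)) ⬝ᵥ (Sum.elim v 0) = v ⬝ᵥ v := by
      simp [sumElim_dotProduct_sumElim]
    rw [e5] at e4
    have := e1 ▸ (e2.trans (e3 ▸ e4))
    exact le_of_mul_le_mul_right (by linarith) hvp
  -- each eigenvalue of S is at least inf of eigenvalues of H
  have hinf : ∀ i, (⨅ j, hH.1.eigenvalues j) ≤ hS.eigenvalues i := by
    intro i
    set v : Fin l → ℝ := ⇑(hS.eigenvectorBasis i) with hv
    have hv0 : v ≠ 0 := fun h =>
      (hS.eigenvectorBasis.orthonormal.ne_zero i) (by ext j; exact congrFun h j)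
    have hvp : 0 < v ⬝ᵥ v := dot_self_pos' hv0
    set w := Sum.elim v (-((D⁻¹ * Bᵀ) *ᵥ v)) with hw
    have e1 : v ⬝ᵥ ((A - B * D⁻¹ * Bᵀ) *ᵥ v) = hS.eigenvalues i * (v ⬝ᵥ v) := by
      rw [hS.mulVec_eigenvectorBasis i]
      simp [dotProduct_smul, smul_eq_mul]
      exact Or.inl rfl
    have e2 : v ⬝ᵥ v ≤ w ⬝ᵥ w := by
      rw [hw, sumElim_dotProduct_sumElim]
      have := dot_self_nonneg' (-((D⁻¹ * Bᵀ) *ᵥ v))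
      linarith
    have e3 := iInf_le_dot' hH.1 w
    rw [key v, e1] at e3
    have e4 : (⨅ j, hH.1.eigenvalues j) * (v ⬝ᵥ v)
        ≤ (⨅ j, hH.1.eigenvalues j) * (w ⬝ᵥ w) :=
      mul_le_mul_of_nonneg_left e2 hinfH.le
    exact le_of_mul_le_mul_right (by linarith) hvp
  have h1 : (⨆ i, hS.eigenvalues i) ≤ ⨆ i, hH.1.eigenvalues i := ciSup_le hsup
  have h2 : (⨅ i, hH.1.eigenvalues i) ≤ ⨅ i, hS.eigenvalues i := le_ciInf hinf
  have h3 : (0:ℝ) ≤ ⨆ i, hH.1.eigenvalues i := by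
    obtain ⟨i0, hi0⟩ := exists_eq_ciSup_of_finite (f := hH.1.eigenvalues)
    rw [← hi0]
    exact (hH.eigenvalues_pos i0).le
  exact div_le_div₀ h3 h1 hinfH h2
end

section
/- The eigenvalues of the Schur complement S = A − B D^{-1} Bᵀ of a symmetric positive definite block matrix H = [[A, B],[Bᵀ, D]] interlace the eigenvalues of H: if λ₁ ≥ … ≥ λ_{ℓ+n} are the eigenvalues of H and μ₁ ≥ … ≥ μ_ℓ those of S, then λ_{i+n} ≤ μ_i ≤ λ_i for all i = 1,…,ℓ. -/
open Matrix

section Aux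
variable {ι : Type*} [Fintype ι] [DecidableEq ι]

private lemma dot_self_expand {M : Matrix ι ι ℝ} (hM : M.IsHermitian) (z : ι → ℝ) :
    z ⬝ᵥ z = ∑ s, ((star (hM.eigenvectorUnitary : Matrix ι ι ℝ) *ᵥ z) s)^2 := by
  set W : Matrix ι ι ℝ := (hM.eigenvectorUnitary : Matrix ι ι ℝ) with hW
  have h1 : W * star W = 1 := Unitary.coe_mul_star_self hM.eigenvectorUnitary
  have hsW : star W = Wᵀ := by ext i j; simp [Matrix.star_apply]
  calc z ⬝ᵥ z = z ⬝ᵥ ((W * star W) *ᵥ z) := by rw [h1, one_mulVec]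
    _ = (z ᵥ* W) ⬝ᵥ (star W *ᵥ z) := by rw [← mulVec_mulVec, dotProduct_mulVec]
    _ = (star W *ᵥ z) ⬝ᵥ (star W *ᵥ z) := by rw [hsW, ← mulVec_transpose]
    _ = ∑ s, ((star W *ᵥ z) s)^2 := by simp [dotProduct, sq]

private lemma dot_mulVec_expand {M : Matrix ι ι ℝ} (hM : M.IsHermitian) (z : ι → ℝ) :
    z ⬝ᵥ (M *ᵥ z)
      = ∑ s, hM.eigenvalues s * ((star (hM.eigenvectorUnitary : Matrix ι ι ℝ) *ᵥ z) s)^2 := by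
  set W : Matrix ι ι ℝ := (hM.eigenvectorUnitary : Matrix ι ι ℝ) with hW
  set d : ι → ℝ := star W *ᵥ z with hd
  have hsW : star W = Wᵀ := by ext i j; simp [Matrix.star_apply]
  have hdiag : Matrix.diagonal (RCLike.ofReal ∘ hM.eigenvalues) = Matrix.diagonal hM.eigenvalues :=
    by congr 1
  calc z ⬝ᵥ (M *ᵥ z)
      = z ⬝ᵥ ((W * Matrix.diagonal hM.eigenvalues * star W) *ᵥ z) := by
        conv_lhs => rw [hM.spectral_theorem, Unitary.conjStarAlgAut_apply]
        rw [hdiag]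
    _ = (z ᵥ* W) ⬝ᵥ (Matrix.diagonal hM.eigenvalues *ᵥ d) := by
        rw [← mulVec_mulVec, ← mulVec_mulVec, dotProduct_mulVec]
    _ = d ⬝ᵥ (Matrix.diagonal hM.eigenvalues *ᵥ d) := by rw [hd, hsW, ← mulVec_transpose]
    _ = ∑ s, hM.eigenvalues s * (d s)^2 := by
        simp [dotProduct, mulVec_diagonal, sq]
        exact Finset.sum_congr rfl fun s _ => by ring

private lemma quad_ge {M : Matrix ι ι ℝ} (hM : M.IsHermitian) (P : ι → Prop) [DecidablePred P]
    {c : ℝ} (hc : ∀ s, P s → c ≤ hM.eigenvalues s) {z : ι → ℝ}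
    (hz : ∀ s, ¬ P s → (star (hM.eigenvectorUnitary : Matrix ι ι ℝ) *ᵥ z) s = 0) :
    c * (z ⬝ᵥ z) ≤ z ⬝ᵥ (M *ᵥ z) := by
  rw [dot_self_expand hM, dot_mulVec_expand hM, Finset.mul_sum]
  refine Finset.sum_le_sum fun s _ => ?_
  by_cases h : P s
  · exact mul_le_mul_of_nonneg_right (hc s h) (sq_nonneg _)
  · rw [hz s h]; simp

private lemma quad_le {M : Matrix ι ι ℝ} (hM : M.IsHermitian) (P : ι → Prop) [DecidablePred P]
    {c : ℝ} (hc : ∀ s, P s → hM.eigenvalues s ≤ c) {z : ι → ℝ}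
    (hz : ∀ s, ¬ P s → (star (hM.eigenvectorUnitary : Matrix ι ι ℝ) *ᵥ z) s = 0) :
    z ⬝ᵥ (M *ᵥ z) ≤ c * (z ⬝ᵥ z) := by
  rw [dot_self_expand hM, dot_mulVec_expand hM, Finset.mul_sum]
  refine Finset.sum_le_sum fun s _ => ?_
  by_cases h : P s
  · exact mul_le_mul_of_nonneg_right (hc s h) (sq_nonneg _)
  · rw [hz s h]; simp

private lemma exists_supported {κ : Type*} [Fintype κ] [DecidableEq κ]
    (W : Matrix ι ι ℝ) (P : ι → Prop) [DecidablePred P]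
    (L : (κ → ℝ) →ₗ[ℝ] (ι → ℝ)) (hL : Function.Injective L)
    (hcard : Fintype.card ι < Fintype.card κ + Fintype.card {s // P s}) :
    ∃ a : κ → ℝ, L a ≠ 0 ∧ ∀ s, ¬ P s → (W *ᵥ L a) s = 0 := by
  by_contra h
  push_neg at h
  let G : (κ → ℝ) →ₗ[ℝ] ({s // ¬ P s} → ℝ) :=
    (LinearMap.funLeft ℝ ℝ (Subtype.val)).comp ((Matrix.mulVecLin W).comp L)
  have hG : Function.Injective G := by
    rw [← LinearMap.ker_eq_bot, Submodule.eq_bot_iff]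
    intro a ha
    by_contra ha0
    have hLa : L a ≠ 0 := fun h0 => ha0 (hL (by rw [h0, map_zero]))
    obtain ⟨s, hs, hns⟩ := h a hLa
    exact hns (congrFun ha ⟨s, hs⟩)
  have := LinearMap.finrank_le_finrank_of_injective hG
  simp only [Module.finrank_pi] at this
  have hc : Fintype.card {s // ¬ P s} + Fintype.card {s // P s} = Fintype.card ι := by
    rw [add_comm, Fintype.card_subtype_compl]
    have : Fintype.card {s // P s} ≤ Fintype.card ι := Fintype.card_subtype_le _
    omega
  omega

/-- extension by zero -/
private def extMap (P : ι → Prop) [DecidablePred P] : ({j // P j} → ℝ) →ₗ[ℝ] (ι → ℝ) where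
  toFun a := fun j => if h : P j then a ⟨j, h⟩ else 0
  map_add' a b := by funext j; by_cases h : P j <;> simp [h]
  map_smul' r a := by funext j; by_cases h : P j <;> simp [h]

/-- the span-of-eigenvectors parametrization: `a ↦ W *ᵥ (extMap P a)` together with its
basic properties. -/
private lemma eigSpan {M : Matrix ι ι ℝ} (hM : M.IsHermitian) (P : ι → Prop) [DecidablePred P]
    {c : ℝ} (hc : ∀ j, P j → c ≤ hM.eigenvalues j) :
    ∃ L : ({j // P j} → ℝ) →ₗ[ℝ] (ι → ℝ), Function.Injective L ∧
      ∀ a, c * ((L a) ⬝ᵥ (L a)) ≤ (L a) ⬝ᵥ (M *ᵥ (L a)) := by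
  set W : Matrix ι ι ℝ := (hM.eigenvectorUnitary : Matrix ι ι ℝ) with hW
  have h1 : star W * W = 1 := Unitary.coe_star_mul_self hM.eigenvectorUnitary
  refine ⟨(Matrix.mulVecLin W).comp (extMap P), ?_, ?_⟩
  · intro a b hab
    have h2 : ∀ v : ι → ℝ, star W *ᵥ (W *ᵥ v) = v := by
      intro v; rw [mulVec_mulVec, h1, one_mulVec]
    have : extMap P a = extMap P b := by
      have := congrArg (fun v => star W *ᵥ v) hab
      simpa [Matrix.mulVecLin_apply, h2] using this
    funext j
    have := congrFun this j.1
    simpa [extMap, dif_pos j.2] using this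
  · intro a
    refine quad_ge hM P hc fun s hs => ?_
    have : star W *ᵥ ((Matrix.mulVecLin W).comp (extMap P) a) = extMap P a := by
      simp [Matrix.mulVecLin_apply, mulVec_mulVec, h1, one_mulVec]
    rw [← hW, this]
    exact dif_neg hs

private lemma eigSpan_le {M : Matrix ι ι ℝ} (hM : M.IsHermitian) (P : ι → Prop) [DecidablePred P]
    {c : ℝ} (hc : ∀ j, P j → hM.eigenvalues j ≤ c) :
    ∃ L : ({j // P j} → ℝ) →ₗ[ℝ] (ι → ℝ), Function.Injective L ∧
      ∀ a, (L a) ⬝ᵥ (M *ᵥ (L a)) ≤ c * ((L a) ⬝ᵥ (L a)) := by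
  set W : Matrix ι ι ℝ := (hM.eigenvectorUnitary : Matrix ι ι ℝ) with hW
  have h1 : star W * W = 1 := Unitary.coe_star_mul_self hM.eigenvectorUnitary
  refine ⟨(Matrix.mulVecLin W).comp (extMap P), ?_, ?_⟩
  · intro a b hab
    have h2 : ∀ v : ι → ℝ, star W *ᵥ (W *ᵥ v) = v := by
      intro v; rw [mulVec_mulVec, h1, one_mulVec]
    have : extMap P a = extMap P b := by
      have := congrArg (fun v => star W *ᵥ v) hab
      simpa [Matrix.mulVecLin_apply, h2] using this
    funext j
    have := congrFun this j.1
    simpa [extMap, dif_pos j.2] using this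
  · intro a
    refine quad_le hM P hc fun s hs => ?_
    have : star W *ᵥ ((Matrix.mulVecLin W).comp (extMap P) a) = extMap P a := by
      simp [Matrix.mulVecLin_apply, mulVec_mulVec, h1, one_mulVec]
    rw [← hW, this]
    exact dif_neg hs

end Aux

/-- graph embedding x ↦ (x, C x) -/
private def graphMap {l n : ℕ} (C : Matrix (Fin n) (Fin l) ℝ) :
    (Fin l → ℝ) →ₗ[ℝ] (Fin l ⊕ Fin n → ℝ) where
  toFun x := Sum.elim x (C *ᵥ x)
  map_add' x y := by funext s; cases s <;> simp [Matrix.mulVec_add]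
  map_smul' r x := by funext s; cases s <;> simp [Matrix.mulVec_smul]

private lemma graphMap_injective {l n : ℕ} (C : Matrix (Fin n) (Fin l) ℝ) :
    Function.Injective (graphMap C) :=
  fun x y h => funext fun j => congrFun h (Sum.inl j)

/-- eigenvalue interlacing for the Schur complement. If λ is a
decreasing enumeration of the eigenvalues of the symmetric positive definite
block matrix H = [[A,B],[Bᵀ,D]] and μ a decreasing enumeration of the
eigenvalues of S = A − B D⁻¹ Bᵀ, then λ_{i+n} ≤ μ_i ≤ λ_i for all i. -/
theorem stmt4 {l n : ℕ}
    (A : Matrix (Fin l) (Fin l) ℝ) (B : Matrix (Fin l) (Fin n) ℝ)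
    (D : Matrix (Fin n) (Fin n) ℝ)
    (hH : (Matrix.fromBlocks A B Bᵀ D).PosDef)
    (hD : IsUnit D.det)
    (hS : (A - B * D⁻¹ * Bᵀ).IsHermitian)
    (lam : Fin (l + n) → ℝ) (hlamA : Antitone lam)
    (e : (Fin l ⊕ Fin n) ≃ Fin (l + n)) (hlam : hH.1.eigenvalues = lam ∘ e)
    (mu : Fin l → ℝ) (hmuA : Antitone mu)
    (e' : Fin l ≃ Fin l) (hmu : hS.eigenvalues = mu ∘ e') :
    ∀ i : Fin l, lam (i.addNat n) ≤ mu i ∧ mu i ≤ lam (Fin.castAdd n i) := by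
  intro i
  set H := Matrix.fromBlocks A B Bᵀ D with hHdef
  set S := A - B * D⁻¹ * Bᵀ with hSdef
  -- eigenvalue identifications
  have heigH : ∀ s, hH.1.eigenvalues s = lam (e s) := fun s => congrFun hlam s
  have heigH' : ∀ j, hH.1.eigenvalues (e.symm j) = lam j := fun j => by
    rw [heigH, e.apply_symm_apply]
  have heigS : ∀ j, hS.eigenvalues j = mu (e' j) := fun j => congrFun hmu j
  have heigS' : ∀ j, hS.eigenvalues (e'.symm j) = mu j := fun j => by
    rw [heigS, e'.apply_symm_apply]
  -- quadratic identities
  have hq0 : ∀ x : Fin l → ℝ,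
      (Sum.elim x (0 : Fin n → ℝ)) ⬝ᵥ (H *ᵥ Sum.elim x 0) = x ⬝ᵥ (A *ᵥ x) := by
    intro x
    rw [hHdef, fromBlocks_mulVec, sumElim_dotProduct_sumElim]
    simp
  have hq2 : ∀ y : Fin n → ℝ,
      (Sum.elim (0 : Fin l → ℝ) y) ⬝ᵥ (H *ᵥ Sum.elim 0 y) = y ⬝ᵥ (D *ᵥ y) := by
    intro y
    rw [hHdef, fromBlocks_mulVec, sumElim_dotProduct_sumElim]
    simp
  have hDpos : D.PosDef := by
    refine .of_dotProduct_mulVec_pos ?_ ?_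
    · ext p q
      have := congrFun (congrFun hH.1 (Sum.inr p)) (Sum.inr q)
      simpa [hHdef, conjTranspose_apply, fromBlocks] using this
    · intro y hy
      have hzne : Sum.elim (0 : Fin l → ℝ) y ≠ 0 := by
        intro h0
        exact hy (funext fun j => congrFun h0 (Sum.inr j))
      have := hH.dotProduct_mulVec_pos hzne
      simpa [hq2 y] using this
  have hq1 : ∀ x : Fin l → ℝ,
      (graphMap (-(D⁻¹ * Bᵀ)) x) ⬝ᵥ (H *ᵥ graphMap (-(D⁻¹ * Bᵀ)) x) = x ⬝ᵥ (S *ᵥ x) := by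
    intro x
    have hy : (-(D⁻¹ * Bᵀ)) *ᵥ x = -(D⁻¹ *ᵥ (Bᵀ *ᵥ x)) := by
      rw [neg_mulVec, mulVec_mulVec]
    show (Sum.elim x ((-(D⁻¹ * Bᵀ)) *ᵥ x)) ⬝ᵥ (H *ᵥ Sum.elim x ((-(D⁻¹ * Bᵀ)) *ᵥ x)) = _
    rw [hy, hHdef, fromBlocks_mulVec, sumElim_dotProduct_sumElim]
    simp only [Sum.elim_comp_inl, Sum.elim_comp_inr]
    have hDy : D *ᵥ (-(D⁻¹ *ᵥ (Bᵀ *ᵥ x))) = -(Bᵀ *ᵥ x) := by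
      rw [mulVec_neg, mulVec_mulVec, Matrix.mul_nonsing_inv D hD, one_mulVec]
    rw [hDy]
    simp only [add_neg_cancel, dotProduct_zero, add_zero]
    simp [mulVec_neg, mulVec_mulVec, sub_mulVec, Matrix.mul_assoc, sub_eq_add_neg,
      add_mulVec, neg_mulVec, dotProduct_add, dotProduct_neg, hSdef]
  -- B D⁻¹ Bᵀ is positive semidefinite
  have hBDB : ∀ x : Fin l → ℝ, 0 ≤ x ⬝ᵥ ((B * D⁻¹ * Bᵀ) *ᵥ x) := by
    intro x
    have : x ⬝ᵥ ((B * D⁻¹ * Bᵀ) *ᵥ x) = (Bᵀ *ᵥ x) ⬝ᵥ (D⁻¹ *ᵥ (Bᵀ *ᵥ x)) := by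
      rw [Matrix.mul_assoc, ← mulVec_mulVec, dotProduct_mulVec, ← mulVec_transpose,
        ← mulVec_mulVec]
    rw [this]
    have := hDpos.inv.posSemidef.dotProduct_mulVec_nonneg (Bᵀ *ᵥ x)
    simpa using this
  -- positivity of dot products
  have hdotpos : ∀ x : Fin l → ℝ, x ≠ 0 → 0 < x ⬝ᵥ x := by
    intro x hx
    rcases (Finset.sum_nonneg fun j _ => mul_self_nonneg (x j)).lt_or_eq with h | h
    · exact h
    · exact absurd ((dotProduct_self_eq_zero).mp h.symm) hx
  have hxval : (i : ℕ) < l := i.2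
  constructor
  · -- lower bound : lam (i.addNat n) ≤ mu i
    set c := lam (i.addNat n) with hc
    have hcpos : 0 < c := by
      rw [hc, ← heigH' (i.addNat n)]
      exact hH.eigenvalues_pos _
    -- span of eigenvectors of S with small eigenvalues
    obtain ⟨L₀, hL₀inj, hL₀quad⟩ := eigSpan_le hS (fun j => hS.eigenvalues j ≤ mu i)
      (fun j hj => hj)
    set L := (graphMap (-(D⁻¹ * Bᵀ))).comp L₀ with hL
    have hLinj : Function.Injective L := (graphMap_injective _).comp hL₀inj
    have hcard1 : l - (i : ℕ) ≤ Fintype.card {j // hS.eigenvalues j ≤ mu i} := by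
      rw [← Fintype.card_fin (l - (i : ℕ))]
      apply Fintype.card_le_of_injective
        (fun k => ⟨e'.symm ⟨(i : ℕ) + (k : ℕ), by omega⟩, by
          rw [heigS']
          exact hmuA (by simp [Fin.le_def])⟩)
      intro k₁ k₂ hk
      have h1 := e'.symm.injective (congrArg Subtype.val hk)
      have h2 := congrArg Fin.val h1
      simp only [] at h2
      exact Fin.ext (by omega)
    have hcard2 : (i : ℕ) + n + 1 ≤ Fintype.card {s // c ≤ hH.1.eigenvalues s} := by
      rw [← Fintype.card_fin ((i : ℕ) + n + 1)]
      apply Fintype.card_le_of_injective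
        (fun k => ⟨e.symm ⟨(k : ℕ), by omega⟩, by
          rw [heigH']
          exact hlamA (by simp [Fin.le_def]; omega)⟩)
      intro k₁ k₂ hk
      have h1 := e.symm.injective (congrArg Subtype.val hk)
      have h2 := congrArg Fin.val h1
      simp only [] at h2
      exact Fin.ext (by omega)
    obtain ⟨a, haz, hacoord⟩ := exists_supported
      (star (hH.1.eigenvectorUnitary : Matrix (Fin l ⊕ Fin n) (Fin l ⊕ Fin n) ℝ))
      (fun s => c ≤ hH.1.eigenvalues s) L hLinj (by
        simp only [Fintype.card_sum, Fintype.card_fin, Fintype.card_subtype_compl]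
        omega)
    set x := L₀ a with hx
    set z := L a with hz
    have hxne : x ≠ 0 := by
      intro h0
      apply haz
      rw [hz, hL, LinearMap.comp_apply, ← hx, h0, map_zero]
    -- quad bounds
    have hub : z ⬝ᵥ (H *ᵥ z) ≤ mu i * (x ⬝ᵥ x) := by
      have := hL₀quad a
      rw [← hx] at this
      calc z ⬝ᵥ (H *ᵥ z) = x ⬝ᵥ (S *ᵥ x) := hq1 x
        _ ≤ mu i * (x ⬝ᵥ x) := this
    have hlb : c * (z ⬝ᵥ z) ≤ z ⬝ᵥ (H *ᵥ z) :=
      quad_ge hH.1 (fun s => c ≤ hH.1.eigenvalues s) (fun s hs => hs) hacoord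
    have hzx : x ⬝ᵥ x ≤ z ⬝ᵥ z := by
      have : z = Sum.elim x ((-(D⁻¹ * Bᵀ)) *ᵥ x) := rfl
      rw [this, sumElim_dotProduct_sumElim]
      have : (0:ℝ) ≤ ((-(D⁻¹ * Bᵀ)) *ᵥ x) ⬝ᵥ ((-(D⁻¹ * Bᵀ)) *ᵥ x) :=
        Finset.sum_nonneg fun j _ => mul_self_nonneg _
      linarith
    have hxx : 0 < x ⬝ᵥ x := hdotpos x hxne
    have : c * (x ⬝ᵥ x) ≤ mu i * (x ⬝ᵥ x) := by
      calc c * (x ⬝ᵥ x) ≤ c * (z ⬝ᵥ z) := by nlinarith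
        _ ≤ z ⬝ᵥ (H *ᵥ z) := hlb
        _ ≤ mu i * (x ⬝ᵥ x) := hub
    exact le_of_mul_le_mul_right (by linarith [this]) hxx |>.trans_eq rfl
  · -- upper bound : mu i ≤ lam (Fin.castAdd n i)
    set c := lam (Fin.castAdd n i) with hc
    obtain ⟨L₀, hL₀inj, hL₀quad⟩ := eigSpan hS (fun j => mu i ≤ hS.eigenvalues j)
      (fun j hj => hj)
    set L := (graphMap (0 : Matrix (Fin n) (Fin l) ℝ)).comp L₀ with hL
    have hLinj : Function.Injective L := (graphMap_injective _).comp hL₀inj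
    have hcard1 : (i : ℕ) + 1 ≤ Fintype.card {j // mu i ≤ hS.eigenvalues j} := by
      rw [← Fintype.card_fin ((i : ℕ) + 1)]
      apply Fintype.card_le_of_injective
        (fun k => ⟨e'.symm ⟨(k : ℕ), by omega⟩, by
          rw [heigS']
          exact hmuA (by simp [Fin.le_def]; omega)⟩)
      intro k₁ k₂ hk
      have h1 := e'.symm.injective (congrArg Subtype.val hk)
      have h2 := congrArg Fin.val h1
      simp only [] at h2
      exact Fin.ext (by omega)
    have hcard2 : l + n - (i : ℕ) ≤ Fintype.card {s // hH.1.eigenvalues s ≤ c} := by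
      rw [← Fintype.card_fin (l + n - (i : ℕ))]
      apply Fintype.card_le_of_injective
        (fun k => ⟨e.symm ⟨(i : ℕ) + (k : ℕ), by omega⟩, by
          rw [heigH']
          exact hlamA (by simp [Fin.le_def])⟩)
      intro k₁ k₂ hk
      have h1 := e.symm.injective (congrArg Subtype.val hk)
      have h2 := congrArg Fin.val h1
      simp only [] at h2
      exact Fin.ext (by omega)
    obtain ⟨a, haz, hacoord⟩ := exists_supported
      (star (hH.1.eigenvectorUnitary : Matrix (Fin l ⊕ Fin n) (Fin l ⊕ Fin n) ℝ))
      (fun s => hH.1.eigenvalues s ≤ c) L hLinj (by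
        simp only [Fintype.card_sum, Fintype.card_fin, Fintype.card_subtype_compl]
        omega)
    set x := L₀ a with hx
    set z := L a with hz
    have hxne : x ≠ 0 := by
      intro h0
      apply haz
      rw [hz, hL, LinearMap.comp_apply, ← hx, h0, map_zero]
    have hzeq : z = Sum.elim x (0 : Fin n → ℝ) := by
      have : z = Sum.elim x ((0 : Matrix (Fin n) (Fin l) ℝ) *ᵥ x) := rfl
      rw [this, zero_mulVec]
    have hzz : z ⬝ᵥ z = x ⬝ᵥ x := by
      rw [hzeq, sumElim_dotProduct_sumElim]; simp
    have hlb : mu i * (x ⬝ᵥ x) ≤ z ⬝ᵥ (H *ᵥ z) := by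
      have h1 := hL₀quad a
      rw [← hx] at h1
      have h2 : x ⬝ᵥ (S *ᵥ x) ≤ x ⬝ᵥ (A *ᵥ x) := by
        have : x ⬝ᵥ (S *ᵥ x) = x ⬝ᵥ (A *ᵥ x) - x ⬝ᵥ ((B * D⁻¹ * Bᵀ) *ᵥ x) := by
          rw [hSdef, sub_mulVec, dotProduct_sub]
        rw [this]
        linarith [hBDB x]
      calc mu i * (x ⬝ᵥ x) ≤ x ⬝ᵥ (S *ᵥ x) := h1
        _ ≤ x ⬝ᵥ (A *ᵥ x) := h2
        _ = z ⬝ᵥ (H *ᵥ z) := by rw [hzeq]; exact (hq0 x).symm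
    have hub : z ⬝ᵥ (H *ᵥ z) ≤ c * (z ⬝ᵥ z) :=
      quad_le hH.1 (fun s => hH.1.eigenvalues s ≤ c) (fun s hs => hs) hacoord
    have hxx : 0 < x ⬝ᵥ x := hdotpos x hxne
    have : mu i * (x ⬝ᵥ x) ≤ c * (x ⬝ᵥ x) := by
      calc mu i * (x ⬝ᵥ x) ≤ z ⬝ᵥ (H *ᵥ z) := hlb
        _ ≤ c * (z ⬝ᵥ z) := hub
        _ = c * (x ⬝ᵥ x) := by rw [hzz]
    exact le_of_mul_le_mul_right (by linarith [this]) hxx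
end

section
/- Inexact gradient descent on a strongly convex function: Let F : ℝ^ℓ → ℝ be μ-strongly convex with L-Lipschitz continuous gradient and minimizer ā. Consider the iteration a^{k+1} = a^k − (1/L)(∇F(a^k) + e_k) with error ‖e_k‖ ≤ Cε_k. Then F(a^{k+1}) − F(ā) ≤ (1 − μ/L)(F(a^k) − F(ā)) + C²ε_k²/(2L). -/
open Set
open scoped RealInnerProductSpace

section aux

variable {E : Type*} [NormedAddCommGroup E] [InnerProductSpace ℝ E] [CompleteSpace E]

private lemma lineDeriv_aux (F : E → ℝ) (hdiff : Differentiable ℝ F) (x v : E) (t : ℝ) :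
    HasDerivAt (fun s : ℝ => F (x + s • v)) ⟪gradient F (x + t • v), v⟫ t := by
  have hline : HasDerivAt (fun s : ℝ => x + s • v) v t := by
    simpa using ((hasDerivAt_id t).smul_const v).const_add x
  have hF := (hdiff (x + t • v)).hasGradientAt.hasFDerivAt
  have h := hF.comp_hasDerivAt t hline
  simpa [InnerProductSpace.toDual_apply_apply, Function.comp_def] using h

private lemma descent_aux (F : E → ℝ) (L : ℝ) (hL : 0 < L) (hdiff : Differentiable ℝ F)
    (hLip : ∀ x y, ‖gradient F x - gradient F y‖ ≤ L * ‖x - y‖) (x v : E) :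
    F (x + v) ≤ F x + ⟪gradient F x, v⟫ + L / 2 * ‖v‖ ^ 2 := by
  have hgradLip : LipschitzWith L.toNNReal (gradient F) := by
    apply LipschitzWith.of_dist_le_mul
    intro p q
    rw [dist_eq_norm, dist_eq_norm, Real.coe_toNNReal _ hL.le]
    exact hLip p q
  have hcont : Continuous fun t : ℝ => ⟪gradient F (x + t • v), v⟫ :=
    (hgradLip.continuous.comp
      (continuous_const.add (continuous_id.smul continuous_const))).inner continuous_const
  have hftc : ∫ t in (0:ℝ)..1, ⟪gradient F (x + t • v), v⟫ = F (x + v) - F x := by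
    have h := intervalIntegral.integral_eq_sub_of_hasDerivAt
      (f := fun s : ℝ => F (x + s • v))
      (f' := fun t : ℝ => ⟪gradient F (x + t • v), v⟫)
      (fun t _ => lineDeriv_aux F hdiff x v t)
      (hcont.intervalIntegrable 0 1)
    simpa using h
  have hint2 : IntervalIntegrable (fun t : ℝ => ⟪gradient F x, v⟫ + L * ‖v‖ ^ 2 * t)
      MeasureTheory.volume 0 1 :=
    (continuous_const.add (continuous_const.mul continuous_id')).intervalIntegrable 0 1
  have hmono : ∫ t in (0:ℝ)..1, ⟪gradient F (x + t • v), v⟫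
      ≤ ∫ t in (0:ℝ)..1, (⟪gradient F x, v⟫ + L * ‖v‖ ^ 2 * t) := by
    apply intervalIntegral.integral_mono_on zero_le_one (hcont.intervalIntegrable 0 1) hint2
    intro t ht
    have h1 : ⟪gradient F (x + t • v), v⟫ - ⟪gradient F x, v⟫
        = ⟪gradient F (x + t • v) - gradient F x, v⟫ := (inner_sub_left _ _ _).symm
    have h2 : ⟪gradient F (x + t • v) - gradient F x, v⟫
        ≤ ‖gradient F (x + t • v) - gradient F x‖ * ‖v‖ := real_inner_le_norm _ _
    have h3 : ‖gradient F (x + t • v) - gradient F x‖ ≤ L * (t * ‖v‖) := by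
      have := hLip (x + t • v) x
      simpa [norm_smul, Real.norm_eq_abs, abs_of_nonneg ht.1] using this
    have h5 := h2.trans (mul_le_mul_of_nonneg_right h3 (norm_nonneg v))
    rw [← h1] at h5
    nlinarith [h5]
  have hval : ∫ t in (0:ℝ)..1, (⟪gradient F x, v⟫ + L * ‖v‖ ^ 2 * t)
      = ⟪gradient F x, v⟫ + L / 2 * ‖v‖ ^ 2 := by
    rw [intervalIntegral.integral_add (g := fun t : ℝ => L * ‖v‖ ^ 2 * t) (intervalIntegrable_const)
      ((continuous_const.mul continuous_id').intervalIntegrable 0 1),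
      intervalIntegral.integral_const, intervalIntegral.integral_const_mul, integral_id]
    norm_num
    ring
  linarith [hftc ▸ (hmono.trans_eq hval)]

private lemma sc_first_order_aux (F : E → ℝ) (μ : ℝ) (hdiff : Differentiable ℝ F)
    (hsc : StrongConvexOn univ μ F) (x y : E) :
    F x + ⟪gradient F x, y - x⟫ + μ / 2 * ‖y - x‖ ^ 2 ≤ F y := by
  have hconv : ConvexOn ℝ univ fun z : E => F z - μ / 2 * ‖z‖ ^ 2 :=
    strongConvexOn_iff_convex.mp hsc
  set u := y - x with hu
  have hψconv : ConvexOn ℝ univ (fun t : ℝ => F (x + t • u) - μ / 2 * ‖x + t • u‖ ^ 2) := by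
    have h := hconv.comp_affineMap (AffineMap.lineMap x y : ℝ →ᵃ[ℝ] E)
    have heq : ((fun z : E => F z - μ / 2 * ‖z‖ ^ 2) ∘ (AffineMap.lineMap x y : ℝ →ᵃ[ℝ] E))
        = fun t : ℝ => F (x + t • u) - μ / 2 * ‖x + t • u‖ ^ 2 := by
      funext t
      simp [Function.comp, AffineMap.lineMap_apply, hu, add_comm]
    rw [heq] at h
    simpa using h
  have hnorm : HasDerivAt (fun s : ℝ => ‖x + s • u‖ ^ 2) (2 * ⟪x + (0:ℝ) • u, u⟫) 0 := by
    have hline : HasDerivAt (fun s : ℝ => x + s • u) u 0 := by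
      simpa using ((hasDerivAt_id (0:ℝ)).smul_const u).const_add x
    have h := hline.inner (𝕜 := ℝ) hline
    have heq : (fun s : ℝ => ⟪x + s • u, x + s • u⟫) = fun s : ℝ => ‖x + s • u‖ ^ 2 := by
      funext s; exact real_inner_self_eq_norm_sq _
    rw [heq] at h
    have hval : ⟪x + (0:ℝ) • u, u⟫ + ⟪u, x + (0:ℝ) • u⟫ = 2 * ⟪x + (0:ℝ) • u, u⟫ := by
      rw [real_inner_comm u]; ring
    rwa [hval] at h
  have hψ' : HasDerivAt (fun t : ℝ => F (x + t • u) - μ / 2 * ‖x + t • u‖ ^ 2)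
      (⟪gradient F (x + (0:ℝ) • u), u⟫ - μ / 2 * (2 * ⟪x + (0:ℝ) • u, u⟫)) 0 :=
    (lineDeriv_aux F hdiff x u 0).sub (hnorm.const_mul (μ / 2))
  have hle := hψconv.le_slope_of_hasDerivWithinAt_Ioi (mem_univ (0:ℝ)) (mem_univ (1:ℝ))
    one_pos hψ'.hasDerivWithinAt
  rw [slope_def_field] at hle
  simp only [zero_smul, add_zero, one_smul] at hle
  have hxy : x + u = y := by rw [hu]; abel
  rw [hxy] at hle
  have hns : ‖y - x‖ ^ 2 = ‖y‖ ^ 2 - 2 * ⟪y, x⟫ + ‖x‖ ^ 2 := norm_sub_sq_real y x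
  have hin : ⟪x, u⟫ = ⟪x, y⟫ - ‖x‖ ^ 2 := by
    rw [hu, inner_sub_right, real_inner_self_eq_norm_sq]
  have hcomm : ⟪y, x⟫ = ⟪x, y⟫ := real_inner_comm x y
  have hd : ((F y - μ / 2 * ‖y‖ ^ 2) - (F x - μ / 2 * ‖x‖ ^ 2)) / (1 - 0)
      = (F y - μ / 2 * ‖y‖ ^ 2) - (F x - μ / 2 * ‖x‖ ^ 2) := by norm_num
  rw [hd] at hle
  rw [← hu] at hns
  rw [hin] at hle
  rw [hcomm] at hns
  rw [hns]
  linarith [hle]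

end aux

/-- inexact gradient descent on a μ-strongly convex function F with
L-Lipschitz gradient and minimizer ā. One step a⁺ = a − (1/L)(∇F(a) + e) with
‖e‖ ≤ Cε satisfies F(a⁺) − F(ā) ≤ (1 − μ/L)(F(a) − F(ā)) + C²ε²/(2L). -/
theorem stmt8 {l : ℕ}
    (F : EuclideanSpace ℝ (Fin l) → ℝ) (μ L C ε : ℝ)
    (hμ : 0 < μ) (hμL : μ ≤ L)
    (hdiff : Differentiable ℝ F)
    (hsc : StrongConvexOn univ μ F)
    (hLip : ∀ x y, ‖gradient F x - gradient F y‖ ≤ L * ‖x - y‖)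
    (abar : EuclideanSpace ℝ (Fin l)) (hmin : ∀ x, F abar ≤ F x)
    (a e : EuclideanSpace ℝ (Fin l)) (he : ‖e‖ ≤ C * ε) :
    F (a - (1/L) • (gradient F a + e)) - F abar
      ≤ (1 - μ/L) * (F a - F abar) + C^2 * ε^2 / (2*L) := by
  have hL : 0 < L := lt_of_lt_of_le hμ hμL
  set g := gradient F a with hg
  set v : EuclideanSpace ℝ (Fin l) := -((1/L) • (g + e)) with hv
  have hpt : a - (1/L) • (g + e) = a + v := by rw [hv, sub_eq_add_neg]
  have hdesc := descent_aux F L hL hdiff hLip a v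
  -- compute inner product and norm
  have hinner : ⟪g, v⟫ = -(1/L) * (‖g‖ ^ 2 + ⟪g, e⟫) := by
    rw [hv, inner_neg_right, real_inner_smul_right, inner_add_right,
      real_inner_self_eq_norm_sq]
    ring
  have hnv : ‖v‖ ^ 2 = (1/L) ^ 2 * (‖g‖ ^ 2 + 2 * ⟪g, e⟫ + ‖e‖ ^ 2) := by
    rw [hv, norm_neg, norm_smul, mul_pow, norm_add_sq_real, Real.norm_eq_abs,
      abs_of_pos (by positivity : (0:ℝ) < 1/L)]
  have step1 : F (a + v) ≤ F a - ‖g‖ ^ 2 / (2 * L) + ‖e‖ ^ 2 / (2 * L) := by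
    have : ⟪g, v⟫ + L / 2 * ‖v‖ ^ 2 = -(‖g‖ ^ 2 / (2 * L)) + ‖e‖ ^ 2 / (2 * L) := by
      rw [hinner, hnv]; field_simp; ring
    linarith [hdesc, this]
  -- PL inequality
  have hPL : 2 * μ * (F a - F abar) ≤ ‖g‖ ^ 2 := by
    have hfo := sc_first_order_aux F μ hdiff hsc a abar
    have habs : |⟪g, abar - a⟫| ≤ ‖g‖ * ‖abar - a‖ := abs_real_inner_le_norm _ _
    have h1 : -(‖g‖ * ‖abar - a‖) ≤ ⟪g, abar - a⟫ := neg_le_of_abs_le habs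
    nlinarith [sq_nonneg (μ * ‖abar - a‖ - ‖g‖), hμ, hfo, h1]
  have hA : 0 ≤ F a - F abar := sub_nonneg.mpr (hmin a)
  have hCe : ‖e‖ ^ 2 ≤ C ^ 2 * ε ^ 2 := by
    nlinarith [norm_nonneg e, he]
  have h2L : (0:ℝ) < 2 * L := by linarith
  have step2 : (μ / L) * (F a - F abar) ≤ ‖g‖ ^ 2 / (2 * L) := by
    rw [show (μ / L) * (F a - F abar) = 2 * μ * (F a - F abar) / (2 * L) by field_simp]
    gcongr
  have step3 : ‖e‖ ^ 2 / (2 * L) ≤ C ^ 2 * ε ^ 2 / (2 * L) := by gcongr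
  rw [hpt]
  linarith [step1, step2, step3]
end
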